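/- For any μ, μ′ ∈ ℝⁿ and σ² > 0, the total variation distance between N(μ, σ²Iₙ) and N(μ′, σ²Iₙ) is at most ‖μ − μ′‖₂ / √(2πσ²). -/

import Mathlib

open MeasureTheory ProbabilityTheory Real
open scoped NNReal ENNReal

/-- Total variation distance between two measures. -/
noncomputable def tvDist {α : Type*} [MeasurableSpace α] (P₀ P₁ : Measure α) : ℝ :=
  ⨆ A : {A : Set α // MeasurableSet A}, |(P₀ A).toReal - (P₁ A).toReal|


lemma my_map_withDensity {α β : Type*} [MeasurableSpace α] [MeasurableSpace β]
    (e : α ≃ᵐ β) (M : Measure α) (g : β → ℝ≥0∞) (hg : Measurable g) :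
    Measure.map e (M.withDensity (g ∘ e)) = (Measure.map e M).withDensity g := by
  ext s hs
  rw [Measure.map_apply e.measurable hs, withDensity_apply _ hs,
    withDensity_apply _ (e.measurable hs),
    MeasureTheory.setLIntegral_map hs hg e.measurable]
  rfl

lemma my_prod_withDensity {α β : Type*} [MeasurableSpace α] [MeasurableSpace β]
    (μ : Measure α) (ν : Measure β) [SigmaFinite μ] [SigmaFinite ν]
    (f : α → ℝ≥0∞) (g : β → ℝ≥0∞) (hf : Measurable f) (hg : Measurable g)
    [SigmaFinite (μ.withDensity f)] [SigmaFinite (ν.withDensity g)] :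
    (μ.withDensity f).prod (ν.withDensity g)
      = (μ.prod ν).withDensity (fun p => f p.1 * g p.2) := by
  refine Measure.prod_eq fun s t hs ht => ?_
  rw [withDensity_apply _ (hs.prod ht), ← Measure.prod_restrict,
    MeasureTheory.lintegral_prod_mul hf.aemeasurable hg.aemeasurable, withDensity_apply _ hs, withDensity_apply _ ht]

lemma pi_gaussian (n : ℕ) (μ : Fin n → ℝ) (σ2 : ℝ≥0) (h : σ2 ≠ 0) :
    Measure.pi (fun i => gaussianReal (μ i) σ2)
      = (volume : Measure (Fin n → ℝ)).withDensity
          (fun x => ∏ i, gaussianPDF (μ i) σ2 (x i)) := by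
  induction n with
  | zero =>
      have : (fun x : Fin 0 → ℝ => ∏ i, gaussianPDF (μ i) σ2 (x i)) = fun _ => 1 := by
        funext x; simp
      rw [this, show (fun _ : Fin 0 → ℝ => (1:ℝ≥0∞)) = 1 from rfl, withDensity_one,
        MeasureTheory.volume_pi, Measure.pi_of_empty, Measure.pi_of_empty]
  | succ n ih =>
      set e := MeasurableEquiv.piFinSuccAbove (fun _ : Fin (n+1) => ℝ) 0 with he
      have hmp := MeasureTheory.measurePreserving_piFinSuccAbove
        (fun i => gaussianReal (μ i) σ2) 0
      have h0 : Measure.pi (fun i => gaussianReal (μ i) σ2)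
          = Measure.map e.symm ((gaussianReal (μ 0) σ2).prod
              (Measure.pi fun j => gaussianReal (μ j.succ) σ2)) := by
        exact (hmp.symm e).map_eq.symm
      haveI h1 : SigmaFinite ((volume : Measure ℝ).withDensity (gaussianPDF (μ 0) σ2)) := by
        rw [← gaussianReal_of_var_ne_zero _ h]; infer_instance
      haveI h2 : SigmaFinite ((volume : Measure (Fin n → ℝ)).withDensity
          (fun x => ∏ j, gaussianPDF (μ j.succ) σ2 (x j))) := by
        rw [← ih (fun j => μ j.succ)]; infer_instance
      have hgm : Measurable fun x : Fin n → ℝ => ∏ j, gaussianPDF (μ j.succ) σ2 (x j) :=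
        Finset.measurable_prod _ fun j _ =>
          (measurable_gaussianPDF _ _).comp (measurable_pi_apply j)
      rw [h0, gaussianReal_of_var_ne_zero _ h, ih (fun j => μ j.succ),
        my_prod_withDensity _ _ _ _ (measurable_gaussianPDF _ _) hgm]
      have hD : (fun p : ℝ × (Fin n → ℝ) =>
            gaussianPDF (μ 0) σ2 p.1 * ∏ j, gaussianPDF (μ j.succ) σ2 (p.2 j))
          = (fun x : Fin (n+1) → ℝ => ∏ i, gaussianPDF (μ i) σ2 (x i)) ∘ e.symm := by
        funext p
        simp [he, MeasurableEquiv.piFinSuccAbove, Fin.insertNth_zero, Fin.prod_univ_succ]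
      have hGm : Measurable fun x : Fin (n+1) → ℝ => ∏ i, gaussianPDF (μ i) σ2 (x i) :=
        Finset.measurable_prod _ fun i _ =>
          (measurable_gaussianPDF _ _).comp (measurable_pi_apply i)
      rw [hD, my_map_withDensity e.symm _ _ hGm]
      congr 1
      exact ((MeasureTheory.volume_preserving_piFinSuccAbove (fun _ : Fin (n+1) => ℝ) 0).symm
        e).map_eq

lemma pdf_conv_pointwise (a b t x : ℝ) (u v : ℝ≥0) (hu : u ≠ 0) (hv : v ≠ 0) :
    gaussianPDFReal a u x * gaussianPDFReal (b + x) v t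
      = gaussianPDFReal (a + b) (u + v) t
        * gaussianPDFReal ((v * a + u * (t - b)) / (u + v)) (u * v / (u + v)) x := by
  have hu' : (0:ℝ) < u := lt_of_le_of_ne (u.coe_nonneg) (by exact_mod_cast (Ne.symm hu))
  have hv' : (0:ℝ) < v := lt_of_le_of_ne (v.coe_nonneg) (by exact_mod_cast (Ne.symm hv))
  have huv : (0:ℝ) < (u:ℝ) + v := by linarith
  have hw : ((u * v / (u + v) : ℝ≥0) : ℝ) = (u:ℝ) * v / ((u:ℝ) + v) := by push_cast; ring
  have hpi : (0:ℝ) < π := Real.pi_pos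
  simp only [gaussianPDFReal, hw, NNReal.coe_add]
  rw [show ((v:ℝ) * a + u * (t - b)) / ((u:ℝ) + v) = ((v:ℝ) * a + u * (t - b)) / ((u:ℝ) + v) from rfl]
  -- constants
  have hc : (√(2 * π * u))⁻¹ * (√(2 * π * v))⁻¹
      = (√(2 * π * ((u:ℝ) + v)))⁻¹ * (√(2 * π * ((u:ℝ) * v / ((u:ℝ) + v))))⁻¹ := by
    rw [← mul_inv, ← mul_inv, ← Real.sqrt_mul (by positivity), ← Real.sqrt_mul (by positivity)]
    congr 2
    field_simp
  -- exponents
  have hexp : (- (x - a)^2 / (2 * u)) + (- (t - (b + x))^2 / (2 * v))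
      = (- (t - (a + b))^2 / (2 * ((u:ℝ) + v)))
        + (- (x - ((v:ℝ) * a + u * (t - b)) / ((u:ℝ) + v))^2
            / (2 * ((u:ℝ) * v / ((u:ℝ) + v)))) := by
    field_simp
    ring
  calc (√(2 * π * u))⁻¹ * rexp (- (x - a)^2 / (2 * u))
        * ((√(2 * π * v))⁻¹ * rexp (- (t - (b + x))^2 / (2 * v)))
      = ((√(2 * π * u))⁻¹ * (√(2 * π * v))⁻¹)
        * rexp ((- (x - a)^2 / (2 * u)) + (- (t - (b + x))^2 / (2 * v))) := by
        rw [Real.exp_add]; ring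
    _ = _ := by rw [hc, hexp, Real.exp_add]; ring

lemma gaussian_conv (a b : ℝ) (u v : ℝ≥0) :
    Measure.map (fun p : ℝ × ℝ => p.1 + p.2) ((gaussianReal a u).prod (gaussianReal b v))
      = gaussianReal (a + b) (u + v) := by
  by_cases hu : u = 0
  · subst hu
    rw [gaussianReal_zero_var, Measure.dirac_prod, Measure.map_map measurable_add
      measurable_prodMk_left,
      show ((fun p : ℝ × ℝ => p.1 + p.2) ∘ Prod.mk a) = (a + ·) from rfl,
      gaussianReal_map_const_add, add_comm b a, zero_add]
  by_cases hv : v = 0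
  · subst hv
    rw [gaussianReal_zero_var, Measure.prod_dirac, Measure.map_map measurable_add
      measurable_prodMk_right,
      show ((fun p : ℝ × ℝ => p.1 + p.2) ∘ fun x : ℝ => (x, b)) = (· + b) from rfl,
      gaussianReal_map_add_const, add_zero]
  have huv : u + v ≠ 0 := fun h => hu (by simpa using (add_eq_zero.mp h).1)
  have hw : u * v / (u + v) ≠ 0 := by
    refine div_ne_zero (mul_ne_zero hu hv) huv
  have hF : Measurable fun q : ℝ × ℝ => gaussianPDF (b + q.1) v q.2 := by
    simp only [gaussianPDF, gaussianPDFReal]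
    fun_prop
  ext s hs
  rw [Measure.map_apply measurable_add hs, Measure.prod_apply (measurable_add hs)]
  have h1 : ∀ x : ℝ, (gaussianReal b v) (Prod.mk x ⁻¹' ((fun p : ℝ × ℝ => p.1 + p.2) ⁻¹' s))
      = ∫⁻ t in s, gaussianPDF (b + x) v t := by
    intro x
    have : Prod.mk x ⁻¹' ((fun p : ℝ × ℝ => p.1 + p.2) ⁻¹' s) = (x + ·) ⁻¹' s := rfl
    rw [this, ← Measure.map_apply (measurable_const_add x) hs, gaussianReal_map_const_add,
      gaussianReal_apply _ hv]
  simp_rw [h1]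
  rw [gaussianReal_of_var_ne_zero _ hu,
    lintegral_withDensity_eq_lintegral_mul _ (measurable_gaussianPDF a u)
      (Measurable.lintegral_prod_right' (f := fun q : ℝ × ℝ => gaussianPDF (b + q.1) v q.2) hF)]
  have h2 : ∀ x : ℝ, (gaussianPDF a u * fun x => ∫⁻ t in s, gaussianPDF (b + x) v t) x
      = ∫⁻ t in s, gaussianPDF a u x * gaussianPDF (b + x) v t := by
    intro x
    simp only [Pi.mul_apply]
    rw [← lintegral_const_mul _ (measurable_gaussianPDF (b + x) v)]
  simp_rw [h2]
  rw [lintegral_lintegral_swap]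
  · have h3 : ∀ t : ℝ, ∫⁻ x, gaussianPDF a u x * gaussianPDF (b + x) v t ∂volume
        = gaussianPDF (a + b) (u + v) t := by
      intro t
      have hpt : ∀ x : ℝ, gaussianPDF a u x * gaussianPDF (b + x) v t
          = gaussianPDF (a + b) (u + v) t
            * gaussianPDF (((v:ℝ) * a + u * (t - b)) / ((u:ℝ) + v)) (u * v / (u + v)) x := by
        intro x
        simp only [gaussianPDF]
        rw [← ENNReal.ofReal_mul (gaussianPDFReal_nonneg _ _ _),
          ← ENNReal.ofReal_mul (gaussianPDFReal_nonneg _ _ _),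
          pdf_conv_pointwise a b t x u v hu hv]
      simp_rw [hpt]
      rw [lintegral_const_mul _ (measurable_gaussianPDF _ _),
        lintegral_gaussianPDF_eq_one _ hw, mul_one]
    simp_rw [h3]
    exact (gaussianReal_apply _ huv s).symm
  · exact Measurable.aemeasurable
      (((measurable_gaussianPDF a u).comp measurable_fst).mul hF)

lemma map_sum_pi (n : ℕ) (Δ μ : Fin n → ℝ) (σ2 : ℝ≥0) :
    Measure.map (fun x : Fin n → ℝ => ∑ i, Δ i * x i)
        (Measure.pi fun i => gaussianReal (μ i) σ2)
      = gaussianReal (∑ i, Δ i * μ i) ((∑ i, ⟨Δ i ^ 2, sq_nonneg _⟩ : ℝ≥0) * σ2) := by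
  induction n with
  | zero =>
      have h0 : (fun x : Fin 0 → ℝ => ∑ i, Δ i * x i) = fun _ => (0:ℝ) := by
        funext x; simp
      rw [h0, Measure.map_const, measure_univ, one_smul]
      simp [gaussianReal_zero_var]
      exact (gaussianReal_zero_var 0).symm.trans (by congr 1; exact (zero_mul σ2).symm)
  | succ n ih =>
      set e := MeasurableEquiv.piFinSuccAbove (fun _ : Fin (n+1) => ℝ) 0 with he
      have hmp := MeasureTheory.measurePreserving_piFinSuccAbove
        (fun i => gaussianReal (μ i) σ2) 0
      simp only [Fin.succAbove_zero] at hmp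
      have hg2 : Measurable fun y : Fin n → ℝ => ∑ j, Δ j.succ * y j :=
        Finset.measurable_sum _ fun j _ => (measurable_pi_apply j).const_mul _
      have hf : Measurable fun p : ℝ × (Fin n → ℝ) => Δ 0 * p.1 + ∑ j, Δ j.succ * p.2 j :=
        (measurable_fst.const_mul _).add (hg2.comp measurable_snd)
      have hT : (fun x : Fin (n+1) → ℝ => ∑ i, Δ i * x i)
          = (fun p : ℝ × (Fin n → ℝ) => Δ 0 * p.1 + ∑ j, Δ j.succ * p.2 j) ∘ e := by
        funext x
        rw [Fin.sum_univ_succ]; rfl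
      rw [hT, ← Measure.map_map hf e.measurable, hmp.map_eq]
      have hprodmap : (fun p : ℝ × (Fin n → ℝ) => Δ 0 * p.1 + ∑ j, Δ j.succ * p.2 j)
          = (fun q : ℝ × ℝ => q.1 + q.2)
            ∘ Prod.map (fun t : ℝ => Δ 0 * t) (fun y : Fin n → ℝ => ∑ j, Δ j.succ * y j) := rfl
      rw [hprodmap, ← Measure.map_map measurable_add
        ((measurable_const_mul _).prodMap hg2), ← Measure.map_prod_map _ _
        (measurable_const_mul _) hg2]
      have h0 : Measure.map (fun t : ℝ => Δ 0 * t) (gaussianReal (μ 0) σ2)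
          = gaussianReal (Δ 0 * μ 0) (⟨Δ 0 ^ 2, sq_nonneg _⟩ * σ2) :=
        gaussianReal_map_const_mul _
      rw [h0, ih (fun j => Δ j.succ) (fun j => μ j.succ), gaussian_conv,
        ← Fin.sum_univ_succ (f := fun i => Δ i * μ i)]
      congr 1
      exact ((congrArg (fun x : ℝ≥0 => x * σ2) (Fin.sum_univ_succ (f := fun i => (⟨Δ i ^ 2, sq_nonneg _⟩ : ℝ≥0)))).trans (add_mul (_ : ℝ≥0) _ _)).symm

lemma gaussian_Ioc_le (m : ℝ) (V : ℝ≥0) (hV : V ≠ 0) (a b : ℝ) (hab : a ≤ b) :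
    gaussianReal m V (Set.Ioc a b) ≤ ENNReal.ofReal ((b - a) / Real.sqrt (2 * π * V)) := by
  rw [gaussianReal_apply_eq_integral _ hV]
  refine ENNReal.ofReal_le_ofReal ?_
  have hVpos : (0:ℝ) < V := lt_of_le_of_ne V.coe_nonneg (by exact_mod_cast hV.symm)
  have hc : (0:ℝ) < Real.sqrt (2 * π * V) := by positivity
  have h1 : ∫ x in Set.Ioc a b, gaussianPDFReal m V x
      ≤ ∫ _x in Set.Ioc a b, (Real.sqrt (2 * π * V))⁻¹ := by
    refine setIntegral_mono_on ((integrable_gaussianPDFReal m V).integrableOn)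
      (integrableOn_const (by rw [Real.volume_Ioc]; exact ENNReal.ofReal_ne_top))
      measurableSet_Ioc ?_
    intro x _
    rw [gaussianPDFReal]
    refine mul_le_of_le_one_right (by positivity) (Real.exp_le_one_iff.2 ?_)
    exact div_nonpos_of_nonpos_of_nonneg (neg_nonpos.2 (sq_nonneg _)) (by positivity)
  refine h1.trans ?_
  rw [setIntegral_const, Measure.real, Real.volume_Ioc, ENNReal.toReal_ofReal (by linarith), smul_eq_mul,
    div_eq_mul_inv]

lemma key_ineq {α : Type*} [MeasurableSpace α] (ν : Measure α) (F G : α → ℝ≥0∞)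
    (hF : Measurable F) (hG : Measurable G) (S : Set α) (hS : MeasurableSet S)
    (hle : ∀ x ∉ S, F x ≤ G x) (hge : ∀ x ∈ S, G x ≤ F x)
    (A : Set α) (hA : MeasurableSet A) :
    ν.withDensity F A + ν.withDensity G S ≤ ν.withDensity G A + ν.withDensity F S := by
  set P := ν.withDensity F
  set Q := ν.withDensity G
  have hPA : P A = P (A ∩ S) + P (A \ S) := (measure_inter_add_diff A hS).symm
  have hQA : Q A = Q (A ∩ S) + Q (A \ S) := (measure_inter_add_diff A hS).symm
  have hPS : P S = P (S ∩ A) + P (S \ A) := (measure_inter_add_diff S hA).symm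
  have hQS : Q S = Q (S ∩ A) + Q (S \ A) := (measure_inter_add_diff S hA).symm
  have h1 : P (A \ S) ≤ Q (A \ S) := by
    rw [withDensity_apply _ (hA.diff hS), withDensity_apply _ (hA.diff hS)]
    exact setLIntegral_mono hG fun x hx => hle x hx.2
  have h2 : Q (S \ A) ≤ P (S \ A) := by
    rw [withDensity_apply _ (hS.diff hA), withDensity_apply _ (hS.diff hA)]
    exact setLIntegral_mono hF fun x hx => hge x hx.1
  rw [hPA, hQA, hPS, hQS, Set.inter_comm S A]
  calc P (A ∩ S) + P (A \ S) + (Q (A ∩ S) + Q (S \ A))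
      ≤ P (A ∩ S) + Q (A \ S) + (Q (A ∩ S) + P (S \ A)) := by
        gcongr
    _ = Q (A ∩ S) + Q (A \ S) + (P (A ∩ S) + P (S \ A)) := by ring

/-- the total variation distance between `N(μ, σ²Iₙ)` and `N(μ′, σ²Iₙ)`
(products of one-dimensional Gaussians) is at most `‖μ − μ′‖₂ / √(2πσ²)`. -/
theorem tv_gaussian_shift (n : ℕ) (μ μ' : Fin n → ℝ) (σ2 : ℝ≥0) (hσ2 : 0 < σ2) :
    tvDist (Measure.pi fun i => gaussianReal (μ i) σ2)
        (Measure.pi fun i => gaussianReal (μ' i) σ2)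
      ≤ Real.sqrt (∑ i, (μ i - μ' i) ^ 2) / Real.sqrt (2 * Real.pi * σ2) := by
  classical
  have hσ : σ2 ≠ 0 := hσ2.ne'
  haveI : Nonempty {A : Set (Fin n → ℝ) // MeasurableSet A} := ⟨⟨∅, MeasurableSet.empty⟩⟩
  set P₀ := Measure.pi (fun i => gaussianReal (μ i) σ2) with hP₀def
  set P₁ := Measure.pi (fun i => gaussianReal (μ' i) σ2) with hP₁def
  set d2r := ∑ i, (μ i - μ' i)^2 with hd2r
  have hRHSnonneg : 0 ≤ Real.sqrt d2r / Real.sqrt (2 * π * σ2) := by positivity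
  unfold tvDist
  rcases eq_or_lt_of_le (Finset.sum_nonneg fun i _ => sq_nonneg (μ i - μ' i)) with h0 | hpos
  · -- degenerate case μ = μ'
    have hμ : μ = μ' := by
      funext i
      have := (Finset.sum_eq_zero_iff_of_nonneg
        (fun j _ => sq_nonneg (μ j - μ' j))).mp h0.symm i (Finset.mem_univ i)
      have := pow_eq_zero_iff (n := 2) (by norm_num) |>.mp this
      linarith [this]
    refine le_trans (ciSup_le fun A => ?_) hRHSnonneg
    rw [hP₀def, hP₁def, hμ]
    simp
  · -- main case
    set Δ := fun i => μ i - μ' i with hΔ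
    have hd2rΔ : d2r = ∑ i, Δ i ^ 2 := hd2r
    have hpos' : 0 < d2r := by rw [hd2r]; exact hpos
    set T := fun x : Fin n → ℝ => ∑ i, Δ i * x i with hT
    have hTmeas : Measurable T :=
      Finset.measurable_sum _ fun i _ => (measurable_pi_apply i).const_mul _
    set m1 := ∑ i, Δ i * μ i with hm1
    set m2 := ∑ i, Δ i * μ' i with hm2
    have hm12 : m1 - m2 = d2r := by
      rw [hm1, hm2, ← Finset.sum_sub_distrib, hd2rΔ]
      exact Finset.sum_congr rfl fun i _ => by ring
    set mid := (m1 + m2) / 2 with hmid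
    set S := T ⁻¹' (Set.Ioi mid) with hSdef
    have hSmeas : MeasurableSet S := hTmeas measurableSet_Ioi
    set F := fun x : Fin n → ℝ => ∏ i, gaussianPDF (μ i) σ2 (x i) with hFdef
    set G := fun x : Fin n → ℝ => ∏ i, gaussianPDF (μ' i) σ2 (x i) with hGdef
    have hFm : Measurable F := Finset.measurable_prod _ fun i _ =>
      (measurable_gaussianPDF _ _).comp (measurable_pi_apply i)
    have hGm : Measurable G := Finset.measurable_prod _ fun i _ =>
      (measurable_gaussianPDF _ _).comp (measurable_pi_apply i)
    have hP0 : P₀ = volume.withDensity F := by rw [hP₀def, pi_gaussian n μ σ2 hσ, hFdef]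
    have hP1 : P₁ = volume.withDensity G := by rw [hP₁def, pi_gaussian n μ' σ2 hσ, hGdef]
    -- pointwise product formula
    have hprod : ∀ (ν : Fin n → ℝ) (x : Fin n → ℝ),
        (∏ i, gaussianPDFReal (ν i) σ2 (x i))
          = ((√(2 * π * σ2))⁻¹) ^ n * rexp (∑ i, -(x i - ν i)^2 / (2 * σ2)) := by
      intro ν x
      simp only [gaussianPDFReal]
      rw [Finset.prod_mul_distrib, Finset.prod_const, Real.exp_sum]
      simp [Finset.card_univ]
    have hsumdiff : ∀ x : Fin n → ℝ,
        (∑ i, (x i - μ i)^2) - (∑ i, (x i - μ' i)^2) = -(2 * T x) + (m1 + m2) := by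
      intro x
      have hterm : ∀ i : Fin n, (x i - μ i)^2 - (x i - μ' i)^2
          = (-2) * (Δ i * x i) + (Δ i * μ i + Δ i * μ' i) := fun i => by
        simp only [hΔ]; ring
      rw [← Finset.sum_sub_distrib, Finset.sum_congr rfl fun i _ => hterm i,
        Finset.sum_add_distrib, ← Finset.mul_sum, Finset.sum_add_distrib]
      simp only [hT, hm1, hm2]
      ring
    have hsum_neg : ∀ (ν : Fin n → ℝ) (x : Fin n → ℝ),
        ∑ i, -(x i - ν i)^2 = -(∑ i, (x i - ν i)^2) := fun ν x =>
      Finset.sum_neg_distrib _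
    -- density comparison
    have hcmpgen : ∀ (ν ν' : Fin n → ℝ) (x : Fin n → ℝ),
        (∑ i, (x i - ν' i)^2) ≤ (∑ i, (x i - ν i)^2) →
        (∏ i, gaussianPDF (ν i) σ2 (x i)) ≤ ∏ i, gaussianPDF (ν' i) σ2 (x i) := by
      intro ν ν' x hle
      have e1 : (∏ i, gaussianPDF (ν i) σ2 (x i))
          = ENNReal.ofReal (∏ i, gaussianPDFReal (ν i) σ2 (x i)) := by
        rw [ENNReal.ofReal_prod_of_nonneg (fun i _ => gaussianPDFReal_nonneg _ _ _)]
        rfl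
      have e2 : (∏ i, gaussianPDF (ν' i) σ2 (x i))
          = ENNReal.ofReal (∏ i, gaussianPDFReal (ν' i) σ2 (x i)) := by
        rw [ENNReal.ofReal_prod_of_nonneg (fun i _ => gaussianPDFReal_nonneg _ _ _)]
        rfl
      rw [e1, e2]
      refine ENNReal.ofReal_le_ofReal ?_
      rw [hprod ν x, hprod ν' x]
      refine mul_le_mul_of_nonneg_left (Real.exp_le_exp.2 ?_) (by positivity)
      rw [← Finset.sum_div, ← Finset.sum_div, hsum_neg, hsum_neg]
      have h2σ : (0:ℝ) < 2 * σ2 := by positivity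
      gcongr
    have hcmp1 : ∀ x ∉ S, F x ≤ G x := by
      intro x hx
      have hTx : T x ≤ mid := le_of_not_gt (by simpa [hSdef] using hx)
      refine hcmpgen μ μ' x ?_
      have := hsumdiff x
      rw [hmid] at hTx
      linarith
    have hcmp2 : ∀ x ∈ S, G x ≤ F x := by
      intro x hx
      have hTx : mid < T x := by simpa [hSdef] using hx
      refine hcmpgen μ' μ x ?_
      have := hsumdiff x
      rw [hmid] at hTx
      linarith
    have hkey : ∀ A : Set (Fin n → ℝ), MeasurableSet A → P₀ A + P₁ S ≤ P₁ A + P₀ S := by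
      intro A hA
      rw [hP0, hP1]
      exact key_ineq volume F G hFm hGm S hSmeas hcmp1 hcmp2 A hA
    -- distribution of T
    set V := (∑ i, ⟨Δ i ^ 2, sq_nonneg _⟩ : ℝ≥0) * σ2 with hVdef
    have hVcoe : (V : ℝ) = d2r * σ2 := by
      rw [hVdef, NNReal.coe_mul, hd2rΔ]
      congr 1
      exact (NNReal.coe_sum _ _).trans (Finset.sum_congr rfl fun i _ => rfl)
    have hVpos : (0:ℝ) < (V:ℝ) := by
      rw [hVcoe]
      exact mul_pos hpos' (by exact_mod_cast hσ2)
    have hVne : V ≠ 0 := by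
      intro h; rw [h] at hVpos; simp at hVpos
    have hmap0 : Measure.map T P₀ = gaussianReal m1 V := by
      rw [hP₀def, hT, hm1, hVdef]; exact map_sum_pi n Δ μ σ2
    have hmap1 : Measure.map T P₁ = gaussianReal m2 V := by
      rw [hP₁def, hT, hm2, hVdef]; exact map_sum_pi n Δ μ' σ2
    have hP0S : P₀ S = gaussianReal m1 V (Set.Ioi mid) := by
      rw [hSdef, ← Measure.map_apply hTmeas measurableSet_Ioi, hmap0]
    have hP1S : P₁ S = gaussianReal m1 V (Set.Ioi (mid + d2r)) := by
      rw [hSdef, ← Measure.map_apply hTmeas measurableSet_Ioi, hmap1]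
      have hshift : gaussianReal m2 V = Measure.map (· + (m2 - m1)) (gaussianReal m1 V) := by
        rw [gaussianReal_map_add_const]
        congr 1
        ring
      rw [hshift, Measure.map_apply (measurable_add_const _) measurableSet_Ioi,
        Set.preimage_add_const_Ioi,
        show mid - (m2 - m1) = mid + d2r from by rw [← hm12]; ring]
    have hsplit : gaussianReal m1 V (Set.Ioi mid)
        = gaussianReal m1 V (Set.Ioc mid (mid + d2r))
          + gaussianReal m1 V (Set.Ioi (mid + d2r)) := by
      rw [← measure_union (Set.Ioc_disjoint_Ioi le_rfl) measurableSet_Ioi,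
        Set.Ioc_union_Ioi_eq_Ioi (by linarith [hpos'])]
    have hbound : (gaussianReal m1 V (Set.Ioc mid (mid + d2r))).toReal
        ≤ √d2r / √(2 * π * σ2) := by
      have hb := gaussian_Ioc_le m1 V hVne mid (mid + d2r) (by linarith [hpos'])
      rw [show mid + d2r - mid = d2r from by ring] at hb
      refine le_trans (ENNReal.toReal_le_of_le_ofReal
        (div_nonneg hpos'.le (Real.sqrt_nonneg _)) hb) ?_
      rw [hVcoe,
        show (2 * π * (d2r * ↑σ2) : ℝ) = d2r * (2 * π * ↑σ2) from by ring,
        Real.sqrt_mul hpos'.le, ← div_div, Real.div_sqrt]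
    -- put it together
    have main : ∀ B : Set (Fin n → ℝ), MeasurableSet B →
        (P₀ B).toReal - (P₁ B).toReal ≤ √d2r / √(2 * π * σ2) := by
      intro B hB
      have h := hkey B hB
      have h' : (P₀ B).toReal + (P₁ S).toReal ≤ (P₁ B).toReal + (P₀ S).toReal := by
        have hne : P₁ B + P₀ S ≠ ∞ :=
          ENNReal.add_ne_top.2 ⟨measure_ne_top _ _, measure_ne_top _ _⟩
        have := ENNReal.toReal_mono hne h
        rwa [ENNReal.toReal_add (measure_ne_top _ _) (measure_ne_top _ _),
          ENNReal.toReal_add (measure_ne_top _ _) (measure_ne_top _ _)] at this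
      have hD : (P₀ S).toReal
          = (gaussianReal m1 V (Set.Ioc mid (mid + d2r))).toReal + (P₁ S).toReal := by
        rw [hP0S, hsplit, ENNReal.toReal_add (measure_ne_top _ _) (measure_ne_top _ _), hP1S]
      linarith
    refine ciSup_le fun A => ?_
    obtain ⟨A, hA⟩ := A
    rw [abs_sub_le_iff]
    refine ⟨main A hA, ?_⟩
    have h := main Aᶜ hA.compl
    have c0 : (P₀ Aᶜ).toReal = 1 - (P₀ A).toReal := by
      rw [measure_compl hA (measure_ne_top _ _), measure_univ,
        ENNReal.toReal_sub_of_le prob_le_one (by simp)]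
      simp
    have c1 : (P₁ Aᶜ).toReal = 1 - (P₁ A).toReal := by
      rw [measure_compl hA (measure_ne_top _ _), measure_univ,
        ENNReal.toReal_sub_of_le prob_le_one (by simp)]
      simp
    rw [c0, c1] at h
    linarith
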